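/- arXiv:1403.7653 — 4 statements merged into one kernel-verified Lean document; each statement's English description precedes it below -/
import Mathlib

section
/- Let A be a unital C*-algebra with no tracial state. Then there exist finitely many elements a₁,…,aₙ ∈ A such that Σ aᵢ*aᵢ = 1 and ‖Σ aᵢaᵢ*‖ < 1. -/
open scoped ComplexOrder

/-- A tracial state on a unital C*-algebra: a positive unital linear functional `φ`
with `φ (x * y) = φ (y * x)`. -/
def IsTracialState {A : Type*} [CStarAlgebra A] (φ : A →ₗ[ℂ] ℂ) : Prop :=
  (∀ x : A, 0 ≤ φ (star x * x)) ∧ φ 1 = 1 ∧ ∀ x y : A, φ (x * y) = φ (y * x)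

/-- The set of sums `∑ aᵢ aᵢ*` over finite tuples with `∑ aᵢ* aᵢ = 1`. -/
def FSet (A : Type*) [CStarAlgebra A] : Set A :=
  {x | ∃ n, ∃ a : Fin n → A, ∑ i, star (a i) * a i = 1 ∧ ∑ i, a i * star (a i) = x}

lemma one_mem_FSet (A : Type*) [CStarAlgebra A] : (1 : A) ∈ FSet A :=
  ⟨1, fun _ => 1, by simp, by simp⟩

lemma FSet_convex (A : Type*) [CStarAlgebra A] : Convex ℝ (FSet A) := by
  rintro x ⟨n, a, ha1, rfl⟩ y ⟨m, b, hb1, rfl⟩ s t hs ht hst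
  refine ⟨n + m, Fin.append (fun i => Real.sqrt s • a i) (fun j => Real.sqrt t • b j), ?_, ?_⟩
  · rw [Fin.sum_univ_add]
    simp only [Fin.append_left, Fin.append_right, star_smul, star_trivial,
      smul_mul_smul_comm, Real.mul_self_sqrt hs, Real.mul_self_sqrt ht]
    rw [← Finset.smul_sum, ← Finset.smul_sum, ha1, hb1, ← add_smul, hst, one_smul]
  · rw [Fin.sum_univ_add]
    simp only [Fin.append_left, Fin.append_right, star_smul, star_trivial,
      smul_mul_smul_comm, Real.mul_self_sqrt hs, Real.mul_self_sqrt ht]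
    rw [← Finset.smul_sum, ← Finset.smul_sum]

/-- Polarization: a linear functional with `φ(z z*) = φ(z* z)` is tracial. -/
lemma trace_of_mul_star {A : Type*} [CStarAlgebra A] (φ : A →ₗ[ℂ] ℂ)
    (hφ : ∀ z : A, φ (z * star z) = φ (star z * z)) (x y : A) : φ (x * y) = φ (y * x) := by
  have h1 := hφ x
  have h2 := hφ (star y)
  rw [star_star] at h2
  have e1 := hφ (x + star y)
  simp only [star_add, star_star, add_mul, mul_add, map_add] at e1
  have e2 := hφ (x + Complex.I • star y)
  simp only [star_add, star_smul, RCLike.star_def, Complex.conj_I, star_star, neg_smul,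
    add_mul, mul_add, mul_neg, neg_mul, smul_mul_assoc, mul_smul_comm, smul_smul,
    neg_neg, one_smul, map_add, map_neg, map_smul, smul_eq_mul] at e2
  have hII : (Complex.I : ℂ) * Complex.I = -1 := Complex.I_mul_I
  linear_combination (e1 - h1 - h2) / 2 + Complex.I * (e2 - h1 - h2) / 2 -
    ((φ (star y * star x) - φ (x * y) + φ (y * x) - φ (star x * star y)) / 2) * hII +
    ((φ (star y * y) - φ (y * star y)) * Complex.I / 2) * hII

/-- If a unital C*-algebra has no tracial state, then there are finitely many elements
`a₁, …, aₙ` with `∑ aᵢ* aᵢ = 1` and `‖∑ aᵢ aᵢ*‖ < 1`. -/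
theorem stmt1 {A : Type*} [CStarAlgebra A]
    (h : ¬ ∃ φ : A →ₗ[ℂ] ℂ, IsTracialState φ) :
    ∃ (n : ℕ) (a : Fin n → A),
      ∑ i, star (a i) * a i = 1 ∧ ‖∑ i, a i * star (a i)‖ < 1 := by
  rcases subsingleton_or_nontrivial A with hsub | hnt
  · exact ⟨0, ![], by simpa using (Subsingleton.elim (0 : A) 1),
      by simpa using zero_lt_one⟩
  by_contra hcon
  push_neg at hcon
  apply h
  letI : PartialOrder A := CStarAlgebra.spectralOrder A
  letI : StarOrderedRing A := CStarAlgebra.spectralOrderedRing A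
  -- F is disjoint from the open unit ball
  have hdisj : Disjoint (Metric.ball (0 : A) 1) (FSet A) := by
    rw [Set.disjoint_left]
    rintro x hx ⟨n, a, ha1, rfl⟩
    exact absurd (mem_ball_zero_iff.mp hx) (not_lt.mpr (hcon n a ha1))
  obtain ⟨f, c, hball, hFge⟩ :=
    geometric_hahn_banach_open (convex_ball 0 1) Metric.isOpen_ball (FSet_convex A) hdisj
  have hc : 0 < c := by
    have := hball 0 (by simp)
    simpa using this
  -- normalized functional g
  obtain ⟨g, hg⟩ : ∃ g : A → ℝ, g = fun x => c⁻¹ * f x := ⟨_, rfl⟩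
  have hgadd : ∀ x y, g (x + y) = g x + g y := by intro x y; simp [hg, map_add, mul_add]
  have hgsmul : ∀ (r : ℝ) x, g (r • x) = r * g x := by
    intro r x; simp [hg, map_smul]; ring
  have hgball : ∀ x : A, ‖x‖ < 1 → g x < 1 := by
    intro x hx
    have := hball x (mem_ball_zero_iff.mpr hx)
    rw [hg]
    calc c⁻¹ * f x < c⁻¹ * c := by
          exact mul_lt_mul_of_pos_left this (inv_pos.mpr hc)
      _ = 1 := inv_mul_cancel₀ hc.ne'
  have hgF : ∀ x ∈ FSet A, 1 ≤ g x := by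
    intro x hx
    have := hFge x hx
    rw [hg, ← inv_mul_cancel₀ hc.ne']
    exact mul_le_mul_of_nonneg_left this (inv_pos.mpr hc).le
  have hgle : ∀ x : A, g x ≤ ‖x‖ := by
    intro x
    by_contra hlt
    push_neg at hlt
    obtain ⟨t, ht1, ht2⟩ := exists_between hlt
    have ht0 : 0 < t := lt_of_le_of_lt (norm_nonneg x) ht1
    have : ‖t⁻¹ • x‖ < 1 := by
      rw [norm_smul, norm_inv, Real.norm_of_nonneg ht0.le]
      rw [inv_mul_lt_iff₀ ht0, mul_one]
      exact ht1
    have := hgball _ this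
    rw [hgsmul] at this
    have : g x < t := by
      have := (mul_lt_mul_of_pos_left this ht0)
      rwa [mul_one, ← mul_assoc, mul_inv_cancel₀ ht0.ne', one_mul] at this
    exact absurd this (not_lt.mpr ht2.le)
  -- symmetrized functional
  obtain ⟨hfun, hhf⟩ : ∃ hf : A → ℝ, hf = fun x => (g x + g (star x)) / 2 := ⟨_, rfl⟩
  have hadd : ∀ x y, hfun (x + y) = hfun x + hfun y := by
    intro x y; simp [hhf, star_add, hgadd]; ring
  have hsmul : ∀ (r : ℝ) x, hfun (r • x) = r * hfun x := by
    intro r x; simp [hhf, star_smul, hgsmul]; ring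
  have hstar : ∀ x, hfun (star x) = hfun x := by intro x; simp [hhf]; ring
  have hzero : hfun 0 = 0 := by
    have := hsmul 0 0; simpa using this
  have hneg : ∀ x, hfun (-x) = - hfun x := by
    intro x
    have := hsmul (-1) x
    simpa using this
  have hsub : ∀ x y, hfun (x - y) = hfun x - hfun y := by
    intro x y; rw [sub_eq_add_neg, hadd, hneg]; ring
  have hle : ∀ x : A, hfun x ≤ ‖x‖ := by
    intro x
    have h1 := hgle x
    have h2 := hgle (star x)
    rw [norm_star] at h2
    rw [hhf]
    dsimp only
    linarith
  have hone : hfun 1 = 1 := by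
    have h1 : (1:ℝ) ≤ hfun 1 := by
      have := hgF 1 (one_mem_FSet A)
      have h2 := hgF 1 (one_mem_FSet A)
      rw [hhf]; dsimp only
      rw [star_one]
      linarith
    have h2 : hfun 1 ≤ 1 := by
      have := hle 1
      rwa [norm_one] at this
    linarith
  have hF : ∀ x ∈ FSet A, 1 ≤ hfun x := by
    intro x hx
    obtain ⟨n, a, ha1, rfl⟩ := hx
    have hsa : star (∑ i, a i * star (a i)) = ∑ i, a i * star (a i) := by
      simp [star_sum, star_mul]
    have := hgF _ ⟨n, a, ha1, rfl⟩
    rw [hhf]; dsimp only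
    rw [hsa]
    linarith
  -- positivity of hfun
  have hpos : ∀ p : A, 0 ≤ p → 0 ≤ hfun p := by
    intro p hp
    rcases eq_or_ne p 0 with rfl | hne
    · simp [hzero]
    · set r : ℝ := ‖p‖ with hr
      have hr0 : 0 < r := norm_pos_iff.mpr hne
      set q : A := r⁻¹ • p with hq
      have hq0 : 0 ≤ q := by
        have key : star (Real.sqrt r⁻¹ • (1:A)) * p * (Real.sqrt r⁻¹ • (1:A)) = q := by
          rw [star_smul, star_trivial (Real.sqrt r⁻¹), star_one, smul_mul_assoc, one_mul,
            smul_mul_smul_comm, mul_one, Real.mul_self_sqrt (inv_nonneg.mpr hr0.le)]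
        rw [← key]
        exact star_left_conjugate_nonneg hp _
      have hqn : ‖q‖ ≤ 1 := by
        rw [hq, norm_smul, norm_inv, Real.norm_of_nonneg hr0.le, ← hr,
          inv_mul_cancel₀ hr0.ne']
      have hq1 : q ≤ 1 := (CStarAlgebra.norm_le_one_iff_of_nonneg q hq0).mp hqn
      have h1q : ‖(1:A) - q‖ ≤ 1 :=
        (CStarAlgebra.norm_le_one_iff_of_nonneg _ (by simpa using hq1)).mpr (by simpa using hq0)
      have : hfun (1 - q) ≤ 1 := le_trans (hle _) h1q
      rw [hsub, hone] at this
      have hq' : 0 ≤ hfun q := by linarith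
      have : p = r • q := by rw [hq, smul_smul, mul_inv_cancel₀ hr0.ne', one_smul]
      rw [this, hsmul]
      exact mul_nonneg hr0.le hq'
  -- trace inequality on the unit ball
  have hkey : ∀ b : A, ‖b‖ ≤ 1 → hfun (star b * b) ≤ hfun (b * star b) := by
    intro b hb
    have hbb : star b * b ≤ 1 := by
      rw [← CStarAlgebra.norm_le_one_iff_of_nonneg _ (star_mul_self_nonneg b)]
      simpa [CStarRing.norm_star_mul_self] using
        mul_le_one₀ ((norm_star b).le.trans hb) (norm_nonneg b) hb
    have h0 : (0:A) ≤ 1 - star b * b := by simpa using hbb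
    set s : A := CFC.sqrt (1 - star b * b) with hs
    have hssa : star s = s := (CFC.sqrt_nonneg _).isSelfAdjoint
    have hss : s * s = 1 - star b * b := CFC.sqrt_mul_sqrt_self _ h0
    have hmem : b * star b + (1 - star b * b) ∈ FSet A := by
      refine ⟨2, ![b, s], ?_, ?_⟩
      · rw [Fin.sum_univ_two]
        simp only [Matrix.cons_val_zero, Matrix.cons_val_one, Matrix.head_cons]
        rw [hssa, hss]
        abel
      · rw [Fin.sum_univ_two]
        simp only [Matrix.cons_val_zero, Matrix.cons_val_one, Matrix.head_cons]
        rw [hssa, hss]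
    have := hF _ hmem
    rw [hadd, hsub, hone] at this
    linarith
  have htr : ∀ b : A, hfun (b * star b) = hfun (star b * b) := by
    have haux : ∀ b : A, ‖b‖ ≤ 1 → hfun (b * star b) = hfun (star b * b) := by
      intro b hb
      have h1 := hkey b hb
      have h2 := hkey (star b) (by rwa [norm_star])
      rw [star_star] at h2
      linarith
    intro b
    rcases eq_or_ne b 0 with rfl | hne
    · simp
    · have hb0 : 0 < ‖b‖ := norm_pos_iff.mpr hne
      set cb : A := ‖b‖⁻¹ • b with hcb
      have hcbn : ‖cb‖ ≤ 1 := by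
        rw [hcb, norm_smul, norm_inv, Real.norm_of_nonneg hb0.le,
          inv_mul_cancel₀ hb0.ne']
      have := haux cb hcbn
      have e1 : b * star b = (‖b‖ * ‖b‖) • (cb * star cb) := by
        rw [hcb, star_smul, star_trivial (‖b‖⁻¹), smul_mul_smul_comm, smul_smul]
        rw [show ‖b‖ * ‖b‖ * (‖b‖⁻¹ * ‖b‖⁻¹) = (‖b‖ * ‖b‖⁻¹) * (‖b‖ * ‖b‖⁻¹) by ring,
          mul_inv_cancel₀ hb0.ne', one_mul, one_smul]
      have e2 : star b * b = (‖b‖ * ‖b‖) • (star cb * cb) := by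
        rw [hcb, star_smul, star_trivial (‖b‖⁻¹), smul_mul_smul_comm, smul_smul]
        rw [show ‖b‖ * ‖b‖ * (‖b‖⁻¹ * ‖b‖⁻¹) = (‖b‖ * ‖b‖⁻¹) * (‖b‖ * ‖b‖⁻¹) by ring,
          mul_inv_cancel₀ hb0.ne', one_mul, one_smul]
      rw [e1, e2, hsmul, hsmul, this]
  -- real and imaginary parts
  obtain ⟨ure, hure⟩ : ∃ u : A → A, u = fun x => (2:ℝ)⁻¹ • (x + star x) := ⟨_, rfl⟩
  obtain ⟨uim, huim⟩ : ∃ u : A → A, u = fun x => (2:ℝ)⁻¹ • (Complex.I • (star x - x)) := ⟨_, rfl⟩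
  have hstar_smul : ∀ (r : ℝ) (x : A), star (r • x) = r • star x := by
    intro r x
    rw [star_smul, star_trivial r]
  have hstarI : ∀ x : A, star (Complex.I • x) = -(Complex.I • star x) := by
    intro x
    rw [star_smul, RCLike.star_def, Complex.conj_I, neg_smul]
  have hureadd : ∀ x y, ure (x + y) = ure x + ure y := by
    intro x y; simp only [hure, star_add]; module
  have huimadd : ∀ x y, uim (x + y) = uim x + uim y := by
    intro x y; simp only [huim, star_add]; module
  have huresmul : ∀ (r : ℝ) x, ure (r • x) = r • ure x := by
    intro r x; simp only [hure, hstar_smul]; module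
  have huimsmul : ∀ (r : ℝ) x, uim (r • x) = r • uim x := by
    intro r x; simp only [huim, hstar_smul]; module
  have hureI : ∀ x, ure (Complex.I • x) = - uim x := by
    intro x
    simp only [hure, huim, hstarI]
    match_scalars <;> simp [Complex.ext_iff] <;> ring
  have huimI : ∀ x, uim (Complex.I • x) = ure x := by
    intro x
    simp only [huim, hure, hstarI]
    match_scalars <;> simp [Complex.ext_iff] <;> ring
  have huresa : ∀ s : A, star s = s → ure s = s := by
    intro s hsa
    rw [hure]; dsimp only
    rw [hsa, ← two_smul ℝ s, smul_smul, inv_mul_cancel₀ (two_ne_zero), one_smul]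
  have huimsa : ∀ s : A, star s = s → uim s = 0 := by
    intro s hsa
    rw [huim]; dsimp only
    rw [hsa, sub_self, smul_zero, smul_zero]
  -- the candidate state as a ℂ-linear functional
  obtain ⟨φ₀, hφ₀⟩ : ∃ p : A → ℂ, p = fun x => (hfun (ure x) : ℂ) + Complex.I * (hfun (uim x) : ℂ) := ⟨_, rfl⟩
  have hφadd : ∀ x y, φ₀ (x + y) = φ₀ x + φ₀ y := by
    intro x y
    simp only [hφ₀, hureadd, huimadd, hadd]
    push_cast
    ring
  have hφreal : ∀ (r : ℝ) x, φ₀ (r • x) = (r : ℂ) * φ₀ x := by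
    intro r x
    simp only [hφ₀, huresmul, huimsmul, hsmul]
    push_cast
    ring
  have hφI : ∀ x, φ₀ (Complex.I • x) = Complex.I * φ₀ x := by
    intro x
    simp only [hφ₀, hureI, huimI, hneg]
    push_cast
    ring_nf
    rw [Complex.I_sq]
    ring
  have hφsmul : ∀ (cz : ℂ) x, φ₀ (cz • x) = cz * φ₀ x := by
    intro cz x
    have hdecomp : cz • x = cz.re • x + cz.im • (Complex.I • x) := by
      rw [← Complex.coe_smul, ← Complex.coe_smul, smul_smul]
      rw [← add_smul]
      congr 1
      linear_combination (Complex.re_add_im cz).symm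
    rw [hdecomp, hφadd, hφreal, hφreal, hφI]
    linear_combination (φ₀ x) * (Complex.re_add_im cz)
  obtain ⟨φ, hφ_apply⟩ : ∃ φ : A →ₗ[ℂ] ℂ, ∀ x, φ x = φ₀ x :=
    ⟨{ toFun := φ₀
       map_add' := hφadd
       map_smul' := fun cz x => by simpa using hφsmul cz x }, fun _ => rfl⟩
  have hφsa : ∀ s : A, star s = s → φ s = (hfun s : ℂ) := by
    intro s hsa
    rw [hφ_apply, hφ₀]
    dsimp only
    rw [huresa s hsa, huimsa s hsa, hzero]
    push_cast
    ring
  refine ⟨φ, ?_, ?_, ?_⟩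
  · intro x
    have hsa : star (star x * x) = star x * x := by simp [star_mul, mul_assoc]
    rw [hφsa _ hsa]
    exact Complex.zero_le_real.mpr (hpos _ (star_mul_self_nonneg x))
  · rw [hφsa 1 (star_one A), hone, Complex.ofReal_one]
  · refine trace_of_mul_star φ ?_
    intro z
    have h1 : star (z * star z) = z * star z := by simp [star_mul]
    have h2 : star (star z * z) = star z * z := by simp [star_mul, mul_assoc]
    rw [hφsa _ h1, hφsa _ h2, htr]
end

section
/- Let A be a unital C*-algebra, b₁,…,bₙ ∈ A with ‖Σ bᵢ*bᵢ − 2·1‖ < 1/3 and ‖Σ bᵢbᵢ* − 1‖ < 1/3. Define aᵢ = bᵢ·(Σⱼ bⱼ*bⱼ)^{-1/2}. Then Σ aᵢ*aᵢ = 1 and ‖Σ aᵢaᵢ*‖ ≤ 4/5 < 1. -/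
open scoped NNReal

/-- Given `b₁, …, bₙ` with `‖∑ bᵢ* bᵢ − 2‖ < 1/3` and `‖∑ bᵢ bᵢ* − 1‖ < 1/3`, the elements
`aᵢ = bᵢ (∑ⱼ bⱼ* bⱼ)^{-1/2}` satisfy `∑ aᵢ* aᵢ = 1` and `‖∑ aᵢ aᵢ*‖ ≤ 4/5 < 1`. -/
theorem stmt2 {A : Type*} [CStarAlgebra A] [PartialOrder A] [StarOrderedRing A]
    (n : ℕ) (b : Fin n → A)
    (h1 : ‖(∑ i, star (b i) * b i) - 2‖ < 1 / 3)
    (h2 : ‖(∑ i, b i * star (b i)) - 1‖ < 1 / 3)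
    (a : Fin n → A)
    (ha : ∀ i, a i = b i * CFC.sqrt (Ring.inverse (∑ j, star (b j) * b j))) :
    ∑ i, star (a i) * a i = 1 ∧
      ‖∑ i, a i * star (a i)‖ ≤ 4 / 5 ∧ (4 : ℝ) / 5 < 1 := by
  refine ⟨?_, ?_, by norm_num⟩
  all_goals {
  obtain hsub | hnt := subsingleton_or_nontrivial A
  · first
      | exact Subsingleton.elim _ _
      | · rw [Subsingleton.elim (∑ i, a i * star (a i)) (0 : A), norm_zero]; norm_num
  set S : A := ∑ i, star (b i) * b i with hS
  have hSsa : IsSelfAdjoint S := by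
    simp only [hS, IsSelfAdjoint, star_sum, star_mul, star_star]
  have hSnn : 0 ≤ S := Finset.sum_nonneg fun i _ => star_mul_self_nonneg (b i)
  -- spectrum bound
  have hspec : ∀ r ∈ spectrum ℝ S, (5/3 : ℝ) ≤ r ∧ r ≤ 7/3 := by
    intro r hr
    have h2A : ((2 : A)) = algebraMap ℝ A 2 := by
      rw [map_ofNat]
    have hmem : r - 2 ∈ spectrum ℝ (S - algebraMap ℝ A 2) := by
      rw [← spectrum.sub_singleton_eq]
      exact Set.sub_mem_sub hr rfl
    have hb : ‖r - 2‖ ≤ ‖S - algebraMap ℝ A 2‖ := spectrum.norm_le_norm_of_mem hmem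
    rw [← h2A] at hb
    have : |r - 2| < 1/3 := lt_of_le_of_lt (by simpa using hb) h1
    rw [abs_lt] at this
    constructor <;> linarith [this.1, this.2]
  have hU : IsUnit S := by
    rw [← spectrum.zero_notMem_iff ℝ]
    intro h0
    have := (hspec 0 h0).1
    norm_num at this
  set R : A := Ring.inverse S with hR
  have hRS : R * S = 1 := Ring.inverse_mul_cancel S hU
  have hSR : S * R = 1 := Ring.mul_inverse_cancel S hU
  have hRsa : IsSelfAdjoint R := by
    show star (Ring.inverse S) = Ring.inverse S
    rw [← Ring.inverse_star, hSsa.star_eq]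
  have hRnn : 0 ≤ R := by
    have : R = star R * S * R := by
      rw [hRsa.star_eq, mul_assoc, hSR, mul_one]
    rw [this]
    exact star_left_conjugate_nonneg hSnn R
  set T : A := CFC.sqrt R with hT
  have hTnn : 0 ≤ T := CFC.sqrt_nonneg R
  have hTsa : IsSelfAdjoint T := IsSelfAdjoint.of_nonneg hTnn
  have hTT : T * T = R := CFC.sqrt_mul_sqrt_self R hRnn
  have h₁ : S * T * T = 1 := by rw [mul_assoc, hTT, hSR]
  have h₂ : T * (T * S) = 1 := by rw [← mul_assoc, hTT, hRS]
  have hcomm : S * T = T * S := by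
    calc S * T = S * T * (T * (T * S)) := by rw [h₂, mul_one]
      _ = S * T * T * (T * S) := by simp only [mul_assoc]
      _ = T * S := by rw [h₁, one_mul]
  have key1 : T * S * T = 1 := by
    rw [mul_assoc, hcomm, ← mul_assoc, hTT, hRS]
  have ha' : ∀ i, a i = b i * T := fun i => ha i
  first
  | -- goal 1 : ∑ star (a i) * a i = 1
    calc ∑ i, star (a i) * a i
        = ∑ i, T * ((star (b i) * b i) * T) := by
          refine Finset.sum_congr rfl fun i _ => ?_
          rw [ha' i, star_mul, hTsa.star_eq]
          simp only [mul_assoc]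
      _ = T * (S * T) := by rw [← Finset.mul_sum, ← Finset.sum_mul]
      _ = 1 := by rw [← mul_assoc]; exact key1
  | -- goal 2 : norm bound
    · have hR35 : R ≤ algebraMap ℝ A (3/5 : ℝ) := by
        refine le_algebraMap_of_spectrum_le (fun x hx => ?_) hRsa
        have hRval : R = ((hU.unit⁻¹ : Aˣ) : A) := by
          rw [hR, ← Ring.inverse_unit hU.unit, hU.unit_spec]
        rw [hRval, ← spectrum.map_inv, Set.mem_inv] at hx
        obtain ⟨hy1, _⟩ := hspec x⁻¹ (by rwa [hU.unit_spec] at hx)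
        by_cases hx0 : x ≤ 0
        · linarith
        · have hxpos : 0 < x := lt_of_not_ge hx0
          nlinarith [inv_mul_cancel₀ (ne_of_gt hxpos)]
      have hle : ∀ i, a i * star (a i) ≤ (3/5 : ℝ) • (b i * star (b i)) := by
        intro i
        rw [ha' i, star_mul, hTsa.star_eq]
        have : b i * T * (T * star (b i)) = b i * R * star (b i) := by
          rw [show b i * T * (T * star (b i)) = b i * (T * T) * star (b i) by
            simp only [mul_assoc], hTT]
        rw [this]
        calc b i * R * star (b i) ≤ b i * algebraMap ℝ A (3/5 : ℝ) * star (b i) :=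
              star_right_conjugate_le_conjugate hR35 (b i)
          _ = (3/5 : ℝ) • (b i * star (b i)) := by
              rw [Algebra.algebraMap_eq_smul_one, mul_smul_comm, mul_one, smul_mul_assoc]
      have hsum_le : ∑ i, a i * star (a i) ≤ (3/5 : ℝ) • ∑ i, b i * star (b i) := by
        rw [Finset.smul_sum]
        exact Finset.sum_le_sum fun i _ => hle i
      have hnnW : 0 ≤ ∑ i, a i * star (a i) :=
        Finset.sum_nonneg fun i _ => mul_star_self_nonneg (a i)
      have hnorm1 : ‖∑ i, a i * star (a i)‖ ≤ ‖(3/5 : ℝ) • ∑ i, b i * star (b i)‖ :=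
        CStarAlgebra.norm_le_norm_of_nonneg_of_le hnnW hsum_le
      have hW : ‖∑ i, b i * star (b i)‖ ≤ 4/3 := by
        calc ‖∑ i, b i * star (b i)‖
            = ‖((∑ i, b i * star (b i)) - 1) + 1‖ := by rw [sub_add_cancel]
          _ ≤ ‖(∑ i, b i * star (b i)) - 1‖ + ‖(1 : A)‖ := norm_add_le _ _
          _ ≤ 1/3 + 1 := by rw [norm_one]; linarith
          _ = 4/3 := by norm_num
      calc ‖∑ i, a i * star (a i)‖ ≤ ‖(3/5 : ℝ) • ∑ i, b i * star (b i)‖ := hnorm1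
        _ = (3/5 : ℝ) * ‖∑ i, b i * star (b i)‖ := by
            rw [norm_smul]; norm_num
        _ ≤ (3/5 : ℝ) * (4/3) := by
            apply mul_le_mul_of_nonneg_left hW; norm_num
        _ = 4/5 := by norm_num }
end

section
/- Let B be a unital C*-algebra, v, w ∈ B with v*v = 1 and ‖w‖ < 1, and suppose v is not invertible. Then y = v + w satisfies: y*y is invertible, y is not invertible, and the element u = y(y*y)^{-1/2} is an isometry with uu* ≠ 1. -/
/-- If `v` is a non-invertible isometry and `‖w‖ < 1`, then `y = v + w` has `y* y`
invertible, `y` is not invertible, and `u = y (y* y)^{-1/2}` is an isometry with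
`u u* ≠ 1` (a non-unitary isometry). -/
theorem stmt3 {B : Type*} [CStarAlgebra B] [PartialOrder B] [StarOrderedRing B]
    (v w : B) (hv : star v * v = 1) (hvni : ¬ IsUnit v) (hw : ‖w‖ < 1)
    (y u : B) (hy : y = v + w)
    (hu : u = y * CFC.sqrt (Ring.inverse (star y * y))) :
    IsUnit (star y * y) ∧ ¬ IsUnit y ∧ star u * u = 1 ∧ u * star u ≠ 1 := by
  have hnt : Nontrivial B := by
    by_contra h
    rw [not_nontrivial_iff_subsingleton] at h
    exact hvni (Subsingleton.elim v 1 ▸ isUnit_one)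
  have hnv : ‖v‖ * ‖v‖ = 1 := by
    rw [← CStarRing.norm_star_mul_self, hv, norm_one]
  have hv1 : ‖v‖ = 1 := by nlinarith [norm_nonneg v]
  set c : B := 1 + w * star v with hc
  have hcn : ‖w * star v‖ < 1 := by
    calc ‖w * star v‖ ≤ ‖w‖ * ‖star v‖ := norm_mul_le _ _
      _ = ‖w‖ * ‖v‖ := by rw [norm_star]
      _ < 1 := by rw [hv1, mul_one]; exact hw
  have hcu : IsUnit c := by
    refine ⟨Units.oneSub (-(w * star v)) (by rwa [norm_neg]), ?_⟩
    simp [Units.oneSub, hc, sub_neg_eq_add]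
  have hyc : y = c * v := by
    rw [hy, hc, add_mul, one_mul, mul_assoc, hv, mul_one]
  have hccnn : (0:B) ≤ star c * c := star_mul_self_nonneg c
  have hccu : IsUnit (star c * c) := hcu.star.mul hcu
  have hsp : ∀ x ∈ spectrum ℝ (star c * c), 0 < x := by
    intro x hx
    refine lt_of_le_of_ne (spectrum_nonneg_of_nonneg hccnn hx) ?_
    rintro rfl
    exact (spectrum.zero_notMem_iff ℝ).mpr hccu hx
  obtain ⟨r, hr, hrle⟩ :=
    (CFC.exists_pos_algebraMap_le_iff (a := star c * c) (.star_mul_self c)).mpr hsp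
  have key : algebraMap ℝ B r ≤ star y * y := by
    calc algebraMap ℝ B r = star v * algebraMap ℝ B r * v := by
          rw [Algebra.algebraMap_eq_smul_one, mul_smul_comm, smul_mul_assoc, mul_one, hv]
      _ ≤ star v * (star c * c) * v := star_left_conjugate_le_conjugate hrle v
      _ = star y * y := by rw [hyc, star_mul]; noncomm_ring
  have hrm : IsUnit (algebraMap ℝ B r) := (isUnit_iff_ne_zero.mpr hr.ne').map (algebraMap ℝ B)
  have hrnn : (0:B) ≤ algebraMap ℝ B r := by
    have h1 : algebraMap ℝ B r =
        star (algebraMap ℝ B (Real.sqrt r)) * algebraMap ℝ B (Real.sqrt r) := by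
      rw [(IsSelfAdjoint.algebraMap B (star_trivial _)).star_eq, ← map_mul,
        Real.mul_self_sqrt hr.le]
    rw [h1]
    exact star_mul_self_nonneg _
  have hau : IsUnit (star y * y) := CStarAlgebra.isUnit_of_le _ key (IsStrictlyPositive.iff_of_unital.mpr ⟨hrnn, hrm⟩)
  have hann : (0:B) ≤ star y * y := star_mul_self_nonneg y
  have hyni : ¬ IsUnit y := by
    intro h
    obtain ⟨cu, hcv⟩ := hcu
    apply hvni
    have hveq : v = ↑cu⁻¹ * y := by rw [hyc, ← hcv, ← mul_assoc, Units.inv_mul, one_mul]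
    rw [hveq]
    exact (cu⁻¹).isUnit.mul h
  have hspec : (0:NNReal) ∉ spectrum NNReal (star y * y) := spectrum.zero_notMem NNReal hau
  have hinv : Ring.inverse (star y * y) = (star y * y) ^ (-1 : ℝ) := by
    obtain ⟨au, hau'⟩ := hau
    rw [← hau', Ring.inverse_unit, CFC.rpow_neg_one_eq_inv au (hau' ▸ hann)]
  have hs : CFC.sqrt (Ring.inverse (star y * y)) = (star y * y) ^ (-(1/2) : ℝ) := by
    rw [hinv, CFC.sqrt_rpow hau (by norm_num)]
    norm_num
  set s : B := (star y * y) ^ (-(1/2) : ℝ) with hsdef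
  have hss : IsSelfAdjoint s := IsSelfAdjoint.of_nonneg CFC.rpow_nonneg
  have hu' : u = y * s := by rw [hu, hs]
  have hiso : star u * u = 1 := by
    rw [hu', star_mul, hss.star_eq]
    calc s * star y * (y * s) = s * (star y * y) * s := by noncomm_ring
      _ = 1 := CFC.conjugate_rpow_neg_one_half _ (IsStrictlyPositive.iff_of_unital.mpr ⟨hann, hau⟩)
  refine ⟨hau, hyni, hiso, ?_⟩
  intro h
  have huu : IsUnit u := ⟨⟨u, star u, h, hiso⟩, rfl⟩
  have hsu : s * (star y * y) ^ ((1:ℝ)/2) = 1 := CFC.rpow_neg_mul_rpow (1/2) (IsStrictlyPositive.iff_of_unital.mpr ⟨hann, hau⟩)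
  have hus : (star y * y) ^ ((1:ℝ)/2) * s = 1 := CFC.rpow_mul_rpow_neg (1/2) (IsStrictlyPositive.iff_of_unital.mpr ⟨hann, hau⟩)
  have hy2 : y = u * (star y * y) ^ ((1:ℝ)/2) := by
    rw [hu', mul_assoc, hsu, mul_one]
  have hts : IsUnit ((star y * y) ^ ((1:ℝ)/2)) := ⟨⟨_, s, hus, hsu⟩, rfl⟩
  exact hyni (hy2 ▸ huu.mul hts)
end

section
/- Let A be a simple unital C*-algebra, B a unital C*-algebra, and π : A → C, ρ : B → C unital *-homomorphisms into a C*-algebra C with commuting ranges, with π injective and ρ injective. Suppose B is simple. Then the map Σ xᵢ ⊗ zᵢ ↦ Σ π(xᵢ)ρ(zᵢ) defines a C*-seminorm β on the algebraic tensor product A ⊙ B such that β(x ⊗ z) = 0 implies x = 0 or z = 0. -/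
open scoped TensorProduct

/-- A unital C*-algebra is (C*-)simple if it has no nontrivial closed two-sided ideals. -/
def IsCStarSimple (A : Type*) [CStarAlgebra A] : Prop :=
  ∀ I : Ideal A, (∀ a ∈ I, ∀ r : A, a * r ∈ I) → IsClosed (I : Set A) →
    I = ⊥ ∨ I = ⊤

/-- Given simple unital C*-algebras `A`, `B` and injective unital *-homomorphisms
`π : A → C`, `ρ : B → C` with commuting ranges, the map
`∑ xᵢ ⊗ zᵢ ↦ ‖∑ π(xᵢ)ρ(zᵢ)‖` is a C*-seminorm `β` on the algebraic tensor product
`A ⊙ B` with `β(x ⊗ z) = 0 → x = 0 ∨ z = 0`. -/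
theorem stmt19 {A B C : Type*} [CStarAlgebra A] [CStarAlgebra B] [CStarAlgebra C]
    (hA : IsCStarSimple A) (hB : IsCStarSimple B)
    (π : A →⋆ₐ[ℂ] C) (ρ : B →⋆ₐ[ℂ] C)
    (hcomm : ∀ (a : A) (b : B), Commute (π a) (ρ b))
    (hπ : Function.Injective π) (hρ : Function.Injective ρ)
    (β : (A ⊗[ℂ] B) → ℝ)
    (hβ : ∀ t : A ⊗[ℂ] B,
      β t = ‖Algebra.TensorProduct.lift π.toAlgHom ρ.toAlgHom hcomm t‖) :
    (∀ t : A ⊗[ℂ] B, 0 ≤ β t) ∧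
    (∀ s t : A ⊗[ℂ] B, β (s + t) ≤ β s + β t) ∧
    (∀ (c : ℂ) (t : A ⊗[ℂ] B), β (c • t) = ‖c‖ * β t) ∧
    (∀ s t : A ⊗[ℂ] B, β (s * t) ≤ β s * β t) ∧
    (∀ (x : A) (z : B), β (x ⊗ₜ[ℂ] z) = 0 → x = 0 ∨ z = 0) := by
  set L := Algebra.TensorProduct.lift π.toAlgHom ρ.toAlgHom hcomm with hL
  refine ⟨fun t => by rw [hβ]; positivity,
    fun s t => by simp only [hβ, map_add]; exact norm_add_le _ _,
    fun c t => by simp only [hβ, map_smul, norm_smul],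
    fun s t => by simp only [hβ, map_mul]; exact norm_mul_le _ _, ?_⟩
  intro x z hz
  rw [hβ] at hz
  have hxz : π x * ρ z = 0 := by
    have : L (x ⊗ₜ[ℂ] z) = π x * ρ z := by simp [hL]
    rw [norm_eq_zero] at hz
    rwa [this] at hz
  -- The ideal I = {w | π x * ρ w = 0}
  have hρcont : Continuous ρ :=
    AddMonoidHomClass.continuous_of_bound ρ 1
      (fun b => by simpa using NonUnitalStarAlgHom.norm_apply_le ρ b)
  set I : Ideal B :=
    { carrier := {w : B | π x * ρ w = 0}
      add_mem' := by
        intro a b ha hb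
        simp only [Set.mem_setOf_eq] at *
        rw [map_add, mul_add, ha, hb, add_zero]
      zero_mem' := by simp
      smul_mem' := by
        intro r w hw
        simp only [Set.mem_setOf_eq, smul_eq_mul] at *
        rw [map_mul, ← mul_assoc, (hcomm x r).eq, mul_assoc, hw, mul_zero] } with hI
  have hright : ∀ a ∈ I, ∀ r : B, a * r ∈ I := by
    intro a ha r
    have ha' : π x * ρ a = 0 := ha
    show π x * ρ (a * r) = 0
    rw [map_mul, ← mul_assoc, ha', zero_mul]
  have hclosed : IsClosed (I : Set B) := by
    have : (I : Set B) = (fun w => π x * ρ w) ⁻¹' {0} := rfl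
    rw [this]
    exact IsClosed.preimage (continuous_const.mul hρcont) isClosed_singleton
  rcases hB I hright hclosed with h | h
  · -- I = ⊥ : then z = 0
    have hzI : z ∈ I := hxz
    right
    simpa [h] using hzI
  · -- I = ⊤ : 1 ∈ I so π x = 0, so x = 0
    have h1 : (1 : B) ∈ I := h ▸ Submodule.mem_top
    have : π x * ρ 1 = 0 := h1
    rw [map_one, mul_one] at this
    left
    exact hπ (by simpa using this)
end
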